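/- arXiv:1401.6560 — 3 statements merged into one kernel-verified Lean document; each statement's English description precedes it below -/
import Mathlib

section
/- Fix natural numbers $p \ge 1$, $m \ge 1$, and for $i \ge 1$ let $\|B_i\| = \frac{\sqrt{(im)!\,((i+1)m)!}}{(im-p)!}$ (assuming $im \ge p$). Then there exists $N$ such that for all $i \ge N$, $\|B_{i-1}\| \cdot \|B_{i+1}\| \le \|B_i\|^2$. -/
open Finset

private lemma fact_add_prod (x m : ℕ) :
    Nat.factorial (x + m) = Nat.factorial x * ∏ j ∈ range m, (x + j + 1) := by
  induction m with
  | zero => simp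
  | succ n ih =>
      rw [prod_range_succ, ← Nat.add_assoc, Nat.factorial_succ, ih]
      ring

private lemma term_ineq (p m t : ℕ) :
    (t + p + 2 * m) * t ^ 2 ≤ (t + p) * (t + m) ^ 2 := by
  nlinarith [Nat.zero_le (m * (m * t + m * p + 2 * p * t))]

private lemma key_ineq (p m b a : ℕ) (ha : a = b + p) :
    Nat.factorial a * Nat.factorial (a + m) * Nat.factorial (a + 2 * m) *
        Nat.factorial (a + 3 * m) * (Nat.factorial (b + m)) ^ 4 ≤
      (Nat.factorial (a + m)) ^ 2 * (Nat.factorial (a + 2 * m)) ^ 2 *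
        (Nat.factorial b) ^ 2 * (Nat.factorial (b + 2 * m)) ^ 2 := by
  subst ha
  set A := Nat.factorial (b + p) with hA
  have e1 := fact_add_prod (b + p) m
  have e2 : Nat.factorial (b + p + 2 * m)
      = Nat.factorial (b + p + m) * ∏ j ∈ range m, (b + p + m + j + 1) := by
    have := fact_add_prod (b + p + m) m
    rw [← this]; ring_nf
  have e3 : Nat.factorial (b + p + 3 * m)
      = Nat.factorial (b + p + 2 * m) * ∏ j ∈ range m, (b + p + 2 * m + j + 1) := by
    have := fact_add_prod (b + p + 2 * m) m
    rw [← this]; ring_nf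
  have f1 := fact_add_prod b m
  have f2 : Nat.factorial (b + 2 * m)
      = Nat.factorial (b + m) * ∏ j ∈ range m, (b + m + j + 1) := by
    have := fact_add_prod (b + m) m
    rw [← this]; ring_nf
  set A1 := ∏ j ∈ range m, (b + p + j + 1) with hA1
  set A2 := ∏ j ∈ range m, (b + p + m + j + 1) with hA2
  set A3 := ∏ j ∈ range m, (b + p + 2 * m + j + 1) with hA3
  set C1 := ∏ j ∈ range m, (b + j + 1) with hC1
  set C2 := ∏ j ∈ range m, (b + m + j + 1) with hC2
  have hkey : A3 * C1 ^ 2 ≤ A1 * C2 ^ 2 := by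
    have : ∀ X : ℕ → ℕ, (∏ j ∈ range m, X j) ^ 2 = ∏ j ∈ range m, (X j) ^ 2 := by
      intro X; rw [← prod_pow]
    rw [hA3, hA1, hC1, hC2, this, this, ← prod_mul_distrib, ← prod_mul_distrib]
    refine prod_le_prod' fun j _ => ?_
    have := term_ineq p m (b + j + 1)
    calc (b + p + 2 * m + j + 1) * (b + j + 1) ^ 2
        = (b + j + 1 + p + 2 * m) * (b + j + 1) ^ 2 := by ring
      _ ≤ (b + j + 1 + p) * (b + j + 1 + m) ^ 2 := this
      _ = (b + p + j + 1) * (b + m + j + 1) ^ 2 := by ring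
  calc Nat.factorial (b + p) * Nat.factorial (b + p + m) * Nat.factorial (b + p + 2 * m) *
        Nat.factorial (b + p + 3 * m) * (Nat.factorial (b + m)) ^ 4
      = (A ^ 4 * A1 ^ 3 * A2 ^ 2 * (Nat.factorial b) ^ 4 * C1 ^ 2) * (A3 * C1 ^ 2) := by
        rw [e3, e2, e1, f1]; ring
    _ ≤ (A ^ 4 * A1 ^ 3 * A2 ^ 2 * (Nat.factorial b) ^ 4 * C1 ^ 2) * (A1 * C2 ^ 2) :=
        Nat.mul_le_mul_left _ hkey
    _ = (Nat.factorial (b + p + m)) ^ 2 * (Nat.factorial (b + p + 2 * m)) ^ 2 *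
        (Nat.factorial b) ^ 2 * (Nat.factorial (b + 2 * m)) ^ 2 := by
        rw [e2, e1, f2, f1]; ring

theorem stmt_4 (p m : ℕ) (hp : 1 ≤ p) (hm : 1 ≤ m)
    (B : ℕ → ℝ)
    (hB : ∀ i, 1 ≤ i → p ≤ i * m →
      B i = Real.sqrt ((Nat.factorial (i * m) : ℝ) * (Nat.factorial ((i + 1) * m) : ℝ)) /
        (Nat.factorial (i * m - p) : ℝ)) :
    ∃ N : ℕ, ∀ i, N ≤ i → B (i - 1) * B (i + 1) ≤ (B i) ^ 2 := by
  refine ⟨p + 2, fun i hi => ?_⟩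
  obtain ⟨j, rfl⟩ : ∃ j, i = j + 1 := ⟨i - 1, by omega⟩
  have hj : p + 1 ≤ j := by omega
  -- arithmetic setup
  have hpj : p ≤ j * m := le_trans (by omega) (Nat.le_mul_of_pos_right j hm)
  set b := j * m - p with hb
  have hbp : j * m = b + p := by omega
  have h1 : (j + 1) * m = b + p + m := by rw [add_mul, one_mul, hbp]
  have h2 : (j + 2) * m = b + p + 2 * m := by rw [add_mul, hbp]
  have h3 : (j + 3) * m = b + p + 3 * m := by rw [add_mul, hbp]
  have hs1 : (j + 1) * m - p = b + m := by omega
  have hs2 : (j + 2) * m - p = b + 2 * m := by omega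
  -- rewrite B values
  have eB0 : B (j + 1 - 1) = Real.sqrt ((Nat.factorial (b + p) : ℝ) *
      (Nat.factorial (b + p + m) : ℝ)) / (Nat.factorial b : ℝ) := by
    have hj11 : j + 1 - 1 = j := rfl
    rw [hj11, hB j (by omega) hpj, hbp, h1, Nat.add_sub_cancel]
  have eB1 : B (j + 1) = Real.sqrt ((Nat.factorial (b + p + m) : ℝ) *
      (Nat.factorial (b + p + 2 * m) : ℝ)) / (Nat.factorial (b + m) : ℝ) := by
    rw [hB (j + 1) (by omega) (by omega), hs1, h1, show j + 1 + 1 = j + 2 from by omega, h2]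
  have eB2 : B (j + 1 + 1) = Real.sqrt ((Nat.factorial (b + p + 2 * m) : ℝ) *
      (Nat.factorial (b + p + 3 * m) : ℝ)) / (Nat.factorial (b + 2 * m) : ℝ) := by
    rw [show j + 1 + 1 = j + 2 from by omega, hB (j + 2) (by omega) (by omega), hs2, h2,
      show j + 2 + 1 = j + 3 from by omega, h3]
  rw [eB0, eB1, eB2]
  set X1 := (Nat.factorial (b + p) : ℝ) * (Nat.factorial (b + p + m) : ℝ) with hX1
  set X2 := (Nat.factorial (b + p + m) : ℝ) * (Nat.factorial (b + p + 2 * m) : ℝ) with hX2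
  set X3 := (Nat.factorial (b + p + 2 * m) : ℝ) * (Nat.factorial (b + p + 3 * m) : ℝ) with hX3
  set c1 := (Nat.factorial b : ℝ) with hc1
  set c2 := (Nat.factorial (b + m) : ℝ) with hc2
  set c3 := (Nat.factorial (b + 2 * m) : ℝ) with hc3
  have hX1n : (0 : ℝ) ≤ X1 := by positivity
  have hX2n : (0 : ℝ) ≤ X2 := by positivity
  have hX3n : (0 : ℝ) ≤ X3 := by positivity
  have hc1p : (0 : ℝ) < c1 := by rw [hc1]; exact_mod_cast Nat.factorial_pos b
  have hc2p : (0 : ℝ) < c2 := by rw [hc2]; exact_mod_cast Nat.factorial_pos (b + m)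
  have hc3p : (0 : ℝ) < c3 := by rw [hc3]; exact_mod_cast Nat.factorial_pos (b + 2 * m)
  rw [div_mul_div_comm, ← Real.sqrt_mul hX1n, div_pow, Real.sq_sqrt hX2n,
    div_le_div_iff₀ (by positivity) (by positivity)]
  have lhs_eq : Real.sqrt (X1 * X3) * c2 ^ 2 = Real.sqrt (X1 * X3 * (c2 ^ 2) ^ 2) := by
    rw [Real.sqrt_mul (x := X1 * X3) (by positivity) ((c2 ^ 2) ^ 2),
      Real.sqrt_sq (by positivity : (0:ℝ) ≤ c2 ^ 2)]
  have rhs_eq : X2 * (c1 * c3) = Real.sqrt ((X2 * (c1 * c3)) ^ 2) := by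
    rw [Real.sqrt_sq (by positivity)]
  rw [lhs_eq, rhs_eq]
  apply Real.sqrt_le_sqrt
  have hnat := key_ineq p m b (b + p) rfl
  have : (Nat.factorial (b + p) * Nat.factorial (b + p + m) * Nat.factorial (b + p + 2 * m) *
        Nat.factorial (b + p + 3 * m) * (Nat.factorial (b + m)) ^ 4 : ℝ) ≤
      ((Nat.factorial (b + p + m)) ^ 2 * (Nat.factorial (b + p + 2 * m)) ^ 2 *
        (Nat.factorial b) ^ 2 * (Nat.factorial (b + 2 * m)) ^ 2 : ℝ) := by
    exact_mod_cast hnat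
  calc X1 * X3 * (c2 ^ 2) ^ 2
      = (Nat.factorial (b + p) * Nat.factorial (b + p + m) * Nat.factorial (b + p + 2 * m) *
        Nat.factorial (b + p + 3 * m) * (Nat.factorial (b + m)) ^ 4 : ℝ) := by
        rw [hX1, hX3, hc2]; push_cast; ring
    _ ≤ ((Nat.factorial (b + p + m)) ^ 2 * (Nat.factorial (b + p + 2 * m)) ^ 2 *
        (Nat.factorial b) ^ 2 * (Nat.factorial (b + 2 * m)) ^ 2 : ℝ) := this
    _ = (X2 * (c1 * c3)) ^ 2 := by rw [hX2, hc1, hc3]; push_cast; ring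
end

section
/- Let $(b_i)_{i\ge 1}$ be positive reals with $b_{i+1}/b_i$ nonincreasing in $i$ (i.e. $b_i b_{i+2} \le b_{i+1}^2$ for all $i$) and $\sum_i 1/b_i < \infty$. Then $\sum_{j=1}^{\infty} \left(\prod_{k=1}^{j} \frac{b_{2k-1}}{b_{2k}}\right)^2 < \infty$. -/
open Finset

theorem stmt_8 (b : ℕ → ℝ) (hb : ∀ i, 0 < b i)
    (hlc : ∀ i, 1 ≤ i → b i * b (i + 2) ≤ (b (i + 1)) ^ 2)
    (hsum : Summable fun i : ℕ => 1 / b i) :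
    Summable fun j : ℕ => (∏ k ∈ Finset.Icc 1 j, b (2 * k - 1) / b (2 * k)) ^ 2 := by
  have key : ∀ j : ℕ, (∏ k ∈ Finset.Icc 1 j, b (2 * k - 1) / b (2 * k)) ^ 2
      ≤ b 1 / b (2 * j + 1) := by
    intro j
    induction j with
    | zero => simp [le_of_eq (div_self (hb 1).ne').symm]
    | succ n ih =>
      have hins : Finset.Icc 1 (n + 1) = insert (n + 1) (Finset.Icc 1 n) := by
        ext x; simp [Finset.mem_Icc, Finset.mem_insert]; omega
      rw [hins, Finset.prod_insert (by simp)]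
      have h1 : 2 * (n + 1) - 1 = 2 * n + 1 := by omega
      have h2 : 2 * (n + 1) = 2 * n + 2 := by omega
      rw [h1, h2, mul_pow]
      have hlc' := hlc (2 * n + 1) (by omega)
      have pos1 := hb (2 * n + 1)
      have pos2 := hb (2 * n + 2)
      have pos3 := hb (2 * n + 3)
      have pos0 := hb 1
      calc (b (2 * n + 1) / b (2 * n + 2)) ^ 2 * (∏ k ∈ Finset.Icc 1 n, b (2 * k - 1) / b (2 * k)) ^ 2
          ≤ (b (2 * n + 1) / b (2 * n + 2)) ^ 2 * (b 1 / b (2 * n + 1)) := by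
            apply mul_le_mul_of_nonneg_left ih (by positivity)
        _ ≤ b 1 / b (2 * (n + 1) + 1) := by
            have h3 : 2 * (n + 1) + 1 = 2 * n + 3 := by omega
            rw [h3, div_pow, div_mul_div_comm, div_le_div_iff₀ (by positivity) (by positivity)]
            calc b (2 * n + 1) ^ 2 * b 1 * b (2 * n + 3)
                = (b (2 * n + 1) * b (2 * n + 3)) * (b (2 * n + 1) * b 1) := by ring
              _ ≤ b (2 * n + 2) ^ 2 * (b (2 * n + 1) * b 1) := by
                  apply mul_le_mul_of_nonneg_right hlc' (by positivity)
              _ = b (2 * n + 2) ^ 2 * (b (2 * n + 1) * b 1) := rfl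
              _ = b 1 * (b (2 * n + 2) ^ 2 * b (2 * n + 1)) := by ring
  have hg : Summable fun j : ℕ => b 1 / b (2 * j + 1) := by
    have hinj : Function.Injective (fun j : ℕ => 2 * j + 1) := fun a c h => by simp only [] at h; omega
    have := (hsum.comp_injective hinj).mul_left (b 1)
    simpa [Function.comp, mul_one_div, div_eq_mul_inv] using this
  exact Summable.of_nonneg_of_le (fun j => by positivity) key hg
end

section
/- Fix natural numbers $p \ge 1$, $m \ge 1$ and define $\omega_k = \frac{\sqrt{k!\,(k+m)!}}{(k-p)!}$ for $k \ge p$. Then for every complex number $\lambda$, the sequence $a_k = \prod_{j=p}^{k-1} \frac{\lambda}{\omega_j}$ (with $a_p = 1$) satisfies $\sum_{k=p}^{\infty} |a_k|^2 < \infty$. -/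
open Finset

theorem stmt_10 (p m : ℕ) (hp : 1 ≤ p) (hm : 1 ≤ m) (lam : ℂ)
    (ω : ℕ → ℝ)
    (hω : ∀ k, p ≤ k →
      ω k = Real.sqrt ((Nat.factorial k : ℝ) * (Nat.factorial (k + m) : ℝ)) /
        (Nat.factorial (k - p) : ℝ)) :
    Summable fun k : ℕ =>
      ‖∏ j ∈ Finset.Ico p k, (lam / (ω j : ℂ))‖ ^ 2 := by
  have hbound : ∀ k, p ≤ k → (k : ℝ) ≤ ω k := by
    intro k hk
    rw [hω k hk]
    have hfact : k * Nat.factorial (k - p) ≤ Nat.factorial k := by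
      calc k * Nat.factorial (k - p) ≤ k * Nat.factorial (k - 1) :=
            Nat.mul_le_mul_left k (Nat.factorial_le (by omega))
        _ = Nat.factorial k := by
            cases k with
            | zero => omega
            | succ n => simp [Nat.factorial_succ]
    have h2 : (Nat.factorial k : ℝ) ≤
        Real.sqrt ((Nat.factorial k : ℝ) * (Nat.factorial (k + m) : ℝ)) := by
      rw [Real.le_sqrt (by positivity)]
      rw [sq]
      have : (Nat.factorial k : ℝ) ≤ (Nat.factorial (k + m) : ℝ) := by
        exact_mod_cast Nat.factorial_le (Nat.le_add_right k m)
      exact mul_le_mul_of_nonneg_left this (Nat.cast_nonneg _)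
      positivity
    rw [le_div_iff₀ (by positivity)]
    calc (k : ℝ) * (Nat.factorial (k - p) : ℝ) ≤ (Nat.factorial k : ℝ) := by
          exact_mod_cast hfact
      _ ≤ _ := h2
  apply summable_of_ratio_norm_eventually_le (r := 1/2) (by norm_num)
  rw [Filter.eventually_atTop]
  refine ⟨max p (⌈2 * ‖lam‖⌉₊ + 1), fun n hn => ?_⟩
  have hpn : p ≤ n := le_trans (le_max_left _ _) hn
  have hωn : (n : ℝ) ≤ ω n := hbound n hpn
  have hn2 : 2 * ‖lam‖ ≤ (n : ℝ) := by
    have : (⌈2 * ‖lam‖⌉₊ : ℝ) ≤ n := by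
      exact_mod_cast le_trans (by omega : ⌈2 * ‖lam‖⌉₊ ≤ max p (⌈2 * ‖lam‖⌉₊ + 1)) hn
    exact le_trans (Nat.le_ceil _) this
  have hωpos : 0 < ω n := lt_of_lt_of_le (by exact_mod_cast (by omega : 0 < n)) hωn
  have hratio : ‖lam / (ω n : ℂ)‖ ≤ 1 / 2 := by
    rw [norm_div]
    have : ‖(ω n : ℂ)‖ = ω n := by
      rw [Complex.norm_real, Real.norm_of_nonneg hωpos.le]
    rw [this, div_le_iff₀ hωpos]
    nlinarith
  have hsplit : ∏ j ∈ Finset.Ico p (n + 1), (lam / (ω j : ℂ)) =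
      (∏ j ∈ Finset.Ico p n, (lam / (ω j : ℂ))) * (lam / (ω n : ℂ)) :=
    Finset.prod_Ico_succ_top hpn _
  have key : ‖∏ j ∈ Finset.Ico p (n + 1), (lam / (ω j : ℂ))‖ ^ 2 ≤
      1 / 2 * ‖∏ j ∈ Finset.Ico p n, (lam / (ω j : ℂ))‖ ^ 2 := by
    rw [hsplit, norm_mul, mul_pow]
    have h1 : ‖lam / (ω n : ℂ)‖ ^ 2 ≤ 1 / 2 := by
      nlinarith [norm_nonneg (lam / (ω n : ℂ))]
    nlinarith [sq_nonneg ‖∏ j ∈ Finset.Ico p n, (lam / (ω j : ℂ))‖,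
      norm_nonneg (∏ j ∈ Finset.Ico p n, (lam / (ω j : ℂ)))]
  calc ‖‖∏ j ∈ Finset.Ico p (n + 1), (lam / (ω j : ℂ))‖ ^ 2‖
      = ‖∏ j ∈ Finset.Ico p (n + 1), (lam / (ω j : ℂ))‖ ^ 2 := by
        rw [Real.norm_of_nonneg (by positivity)]
    _ ≤ 1 / 2 * ‖∏ j ∈ Finset.Ico p n, (lam / (ω j : ℂ))‖ ^ 2 := key
    _ = 1 / 2 * ‖‖∏ j ∈ Finset.Ico p n, (lam / (ω j : ℂ))‖ ^ 2‖ := by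
        rw [Real.norm_of_nonneg (by positivity)]
end
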